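/- For the OWL norm Ω_w with nonincreasing nonnegative weights w and w̄ = (Σ_{j=1}^N w_j)/N > 0, the dual norm Ω_w* satisfies (1/w_1)·‖β‖_∞ ≤ Ω_w*(β) ≤ (1/w̄)·‖β‖_∞ for all β ∈ ℝ^N. -/

import Mathlib

noncomputable def owlSorted {N : ℕ} (β : Fin N → ℝ) : Fin N → ℝ :=
  fun i => |β (Tuple.sort (fun j => |β j|) i.rev)|

noncomputable def owl {N : ℕ} (w β : Fin N → ℝ) : ℝ :=
  ∑ i, w i * owlSorted β i

noncomputable def owlDual {M : ℕ} (v z : Fin M → ℝ) : ℝ :=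
  ⨆ i : Fin M, (∑ j ∈ Finset.univ.filter (fun j => j ≤ i), v j)⁻¹ *
    ∑ j ∈ Finset.univ.filter (fun j => j ≤ i), owlSorted z j

theorem stmt_1 {N : ℕ} (w : Fin (N + 1) → ℝ) (hmono : Antitone w)
    (hnonneg : ∀ i, 0 ≤ w i) (hpos : 0 < w 0)
    (wbar : ℝ) (hwbar : wbar = (∑ j, w j) / (N + 1)) (hwbarpos : 0 < wbar)
    (β : Fin (N + 1) → ℝ) :
    (1 / w 0) * (Finset.univ.sup' Finset.univ_nonempty fun i => |β i|) ≤ owlDual w β ∧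
    owlDual w β ≤ (1 / wbar) * (Finset.univ.sup' Finset.univ_nonempty fun i => |β i|) := by
  set M := Finset.univ.sup' Finset.univ_nonempty fun i => |β i| with hMdef
  have hle : ∀ j : Fin (N + 1), owlSorted β j ≤ M := fun j =>
    Finset.le_sup' (fun i => |β i|) (Finset.mem_univ _)
  have hMnn : 0 ≤ M := le_trans (abs_nonneg (β 0)) (Finset.le_sup' (fun i => |β i|) (Finset.mem_univ (0 : Fin (N+1))))
  have h0 : owlSorted β 0 = M := by
    refine le_antisymm (hle 0) ?_
    refine Finset.sup'_le _ _ (fun i _ => ?_)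
    have h := Tuple.monotone_sort (fun j => |β j|)
      (Fin.le_last ((Tuple.sort (fun j => |β j|)).symm i))
    simpa [owlSorted, Fin.rev_zero] using h
  have hfilt : ∀ i : Fin (N + 1),
      Finset.univ.filter (fun j => j ≤ i) = Finset.Iic i := fun i => by
    ext j; simp
  have hApos : ∀ i : Fin (N + 1), 0 < ∑ j ∈ Finset.Iic i, w j := by
    intro i
    refine Finset.sum_pos' (fun j _ => hnonneg j) ⟨0, ?_, hpos⟩
    simp [Fin.zero_le]
  have hpartial : ∀ i : Fin (N + 1),
      ((i : ℕ) + 1 : ℝ) * wbar ≤ ∑ j ∈ Finset.Iic i, w j := by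
    intro i
    set A := ∑ j ∈ Finset.Iic i, w j with hA
    set B := ∑ j ∈ (Finset.Iic i)ᶜ, w j with hB
    have hcardc : ((Finset.Iic i)ᶜ).card + ((i : ℕ) + 1) = N + 1 := by
      have h1 : (Finset.Iic i).card = (i : ℕ) + 1 := Fin.card_Iic i
      have h2 : (Finset.Iic i).card ≤ N + 1 := by
        simpa using Finset.card_le_univ (Finset.Iic i)
      rw [Finset.card_compl, h1]
      simp at h2 ⊢
      omega
    have htot : A + B = ∑ j, w j := by
      rw [hA, hB, Finset.sum_add_sum_compl]
    have h1 : ((i : ℕ) + 1 : ℝ) * w i ≤ A := by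
      have := Finset.card_nsmul_le_sum (Finset.Iic i) w (w i)
        (fun j hj => hmono (Finset.mem_Iic.mp hj))
      rwa [Fin.card_Iic, nsmul_eq_mul, Nat.cast_add, Nat.cast_one] at this
    have h2 : B ≤ (((Finset.Iic i)ᶜ).card : ℝ) * w i := by
      have := Finset.sum_le_card_nsmul ((Finset.Iic i)ᶜ) w (w i)
        (fun j hj => by
          have : ¬ j ≤ i := by simpa using hj
          exact hmono (le_of_not_ge this))
      rwa [nsmul_eq_mul] at this
    have hwin : 0 ≤ w i := hnonneg i
    set c : ℝ := (((Finset.Iic i)ᶜ).card : ℝ) with hc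
    have hcnn : 0 ≤ c := Nat.cast_nonneg _
    have hcsum : c + ((i : ℕ) + 1 : ℝ) = (N : ℝ) + 1 := by
      rw [hc]
      exact_mod_cast congrArg (fun n : ℕ => (n : ℝ)) hcardc
    have p1 : ((i : ℕ) + 1 : ℝ) * B ≤ ((i : ℕ) + 1 : ℝ) * (c * w i) :=
      mul_le_mul_of_nonneg_left h2 (by positivity)
    have p2 : c * (((i : ℕ) + 1 : ℝ) * w i) ≤ c * A := mul_le_mul_of_nonneg_left h1 hcnn
    have p3 : ((i : ℕ) + 1 : ℝ) * (c * w i) = c * (((i : ℕ) + 1 : ℝ) * w i) := by ring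
    have key : ((i : ℕ) + 1 : ℝ) * (A + B) ≤ ((N : ℝ) + 1) * A := by
      calc ((i : ℕ) + 1 : ℝ) * (A + B) = ((i : ℕ) + 1 : ℝ) * A + ((i : ℕ) + 1 : ℝ) * B := by
            ring
        _ ≤ ((i : ℕ) + 1 : ℝ) * A + c * A := by linarith
        _ = ((N : ℝ) + 1) * A := by rw [← hcsum]; ring
    rw [hwbar, htot] at *
    rw [div_eq_mul_inv, ← mul_assoc]
    have hN1 : (0:ℝ) < (N : ℝ) + 1 := by positivity
    rw [mul_inv_le_iff₀ hN1]
    calc ((i : ℕ) + 1 : ℝ) * ∑ j, w j ≤ ((N : ℝ) + 1) * A := by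
          rw [← htot]; exact key
      _ = A * ((N : ℝ) + 1) := by ring
  constructor
  · have hb : BddAbove (Set.range fun i : Fin (N + 1) =>
        (∑ j ∈ Finset.univ.filter (fun j => j ≤ i), w j)⁻¹ *
          ∑ j ∈ Finset.univ.filter (fun j => j ≤ i), owlSorted β j) :=
      Set.Finite.bddAbove (Set.finite_range _)
    have h := le_ciSup hb (0 : Fin (N + 1))
    have hIic0 : Finset.Iic (0 : Fin (N + 1)) = {0} := by
      ext j; simp [Fin.le_zero_iff]
    rw [hfilt 0, hIic0] at h
    simpa [h0, one_div, Finset.sum_singleton, owlDual] using h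
  · refine ciSup_le fun i => ?_
    rw [hfilt i]
    set A := ∑ j ∈ Finset.Iic i, w j with hA
    have hApos' := hApos i
    have hT : ∑ j ∈ Finset.Iic i, owlSorted β j ≤ ((i : ℕ) + 1 : ℝ) * M := by
      have := Finset.sum_le_card_nsmul (Finset.Iic i) (owlSorted β) M
        (fun j _ => hle j)
      rwa [Fin.card_Iic, nsmul_eq_mul, Nat.cast_add, Nat.cast_one] at this
    have hip : (0:ℝ) < ((i : ℕ) + 1 : ℝ) := by positivity
    have hstep1 : A⁻¹ * ∑ j ∈ Finset.Iic i, owlSorted β j ≤ A⁻¹ * (((i : ℕ) + 1 : ℝ) * M) :=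
      mul_le_mul_of_nonneg_left hT (inv_nonneg.mpr hApos'.le)
    have hstep2 : A⁻¹ ≤ (((i : ℕ) + 1 : ℝ) * wbar)⁻¹ := by
      apply inv_anti₀ (by positivity) (hpartial i)
    have hstep3 : A⁻¹ * (((i : ℕ) + 1 : ℝ) * M) ≤
        (((i : ℕ) + 1 : ℝ) * wbar)⁻¹ * (((i : ℕ) + 1 : ℝ) * M) :=
      mul_le_mul_of_nonneg_right hstep2 (by positivity)
    have heq : (((i : ℕ) + 1 : ℝ) * wbar)⁻¹ * (((i : ℕ) + 1 : ℝ) * M) = (1 / wbar) * M := by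
      field_simp
    linarith
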